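/- For h ∈ {3, 5, 6, 7, 8, 9}, the number of Fink–Mao region words of length h of unknot type (including the word L,R,C for h = 3) is: 1 for h = 3, and 2 for each h ∈ {5, 6, 7, 8, 9}; hence exactly 11 of the 85 Fink–Mao tie sequences of lengths 3 through 9 are of unknot type, and there is no unknot-type word of length 4. -/

import Mathlib

/-- A region of the tie diagram: left, right, or center. -/
inductive Region : Type
  | L | R | C
deriving DecidableEq

open Region

/-- A Fink–Mao region word: a list of letters from {L, R, C} with consecutive
letters distinct, first letter `L`, ending with the suffix `L,R,C` or `R,L,C`. -/
def FMWord (w : List Region) : Prop :=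
  w.Chain' (· ≠ ·) ∧ w.head? = some L ∧
    ([L, R, C] <:+ w ∨ [R, L, C] <:+ w)

/-- Swap `L` and `R` (fixing `C`). -/
def other : Region → Region
  | L => R
  | R => L
  | C => C

/-- `altWord s n` is the alternating word of length `n` starting with letter `s`. -/
def altWord : Region → ℕ → List Region
  | _, 0 => []
  | s, n + 1 => s :: altWord (other s) n

/-- A word is of unknot type if it equals `L,R,C`, or has the form `g ++ [C, X, Y, C]`
with `g` a nonempty alternating L/R word starting with `L` and `(X, Y)` equal to
`(R, L)` or `(L, R)`. -/
def UnknotType (w : List Region) : Prop :=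
  w = [L, R, C] ∨
    ∃ (n : ℕ) (X Y : Region), w = altWord L (n + 1) ++ [C, X, Y, C] ∧
      ((X = R ∧ Y = L) ∨ (X = L ∧ Y = R))

/-- `U h` is the number of Fink–Mao region words of length `h` of unknot type. -/
noncomputable def U (h : ℕ) : ℕ :=
  Nat.card {w : List Region // FMWord w ∧ w.length = h ∧ UnknotType w}

lemma altWord_length : ∀ (n : ℕ) (s : Region), (altWord s n).length = n := by
  intro n
  induction n with
  | zero => intro s; rfl
  | succ n ih => intro s; simp [altWord, ih]

lemma other_ne_C : ∀ s : Region, s ≠ C → other s ≠ C := by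
  intro s; cases s <;> simp [other]

lemma ne_other : ∀ s : Region, s ≠ C → s ≠ other s := by
  intro s; cases s <;> simp [other]

lemma altWord_chain : ∀ (n : ℕ) (s : Region), s ≠ C → (altWord s n).Chain' (· ≠ ·) := by
  intro n
  induction n with
  | zero => intro s _; simp [altWord, List.Chain', List.isChain_nil]
  | succ n ih =>
    intro s hs
    rw [altWord, List.Chain', List.isChain_cons]
    refine ⟨?_, ih _ (other_ne_C s hs)⟩
    intro y hy
    cases n with
    | zero => simp [altWord] at hy
    | succ m =>
      rw [altWord] at hy
      simp at hy
      subst hy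
      exact ne_other s hs

lemma altWord_getLast_ne_C : ∀ (n : ℕ) (s : Region), s ≠ C →
    ∀ x ∈ (altWord s (n + 1)).getLast?, x ≠ C := by
  intro n
  induction n with
  | zero =>
    intro s hs x hx
    simp [altWord] at hx
    subst hx; exact hs
  | succ n ih =>
    intro s hs x hx
    rw [altWord, altWord, List.getLast?_cons_cons, ← altWord] at hx
    exact ih (other s) (other_ne_C s hs) x hx

lemma altWord_head? (n : ℕ) (s : Region) : (altWord s (n + 1)).head? = some s := rfl

lemma FMWord_alt (n : ℕ) (X Y : Region) (hXY : (X = R ∧ Y = L) ∨ (X = L ∧ Y = R)) :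
    FMWord (altWord L (n + 1) ++ [C, X, Y, C]) := by
  refine ⟨?_, ?_, ?_⟩
  · rw [List.Chain', List.isChain_append]
    refine ⟨altWord_chain _ L (by decide), ?_, ?_⟩
    · rcases hXY with ⟨rfl, rfl⟩ | ⟨rfl, rfl⟩ <;>
        · simp only [List.isChain_cons_cons, List.isChain_singleton, and_true]
          refine ⟨?_, ?_, ?_⟩ <;> decide
    · intro x hx y hy
      simp at hy
      subst hy
      exact altWord_getLast_ne_C n L (by decide) x hx
  · rw [List.head?_append_of_ne_nil]
    · exact altWord_head? n L
    · simp [altWord]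
  · rcases hXY with ⟨rfl, rfl⟩ | ⟨rfl, rfl⟩
    · exact Or.inr ((List.suffix_cons C [R, L, C]).trans (List.suffix_append _ _))
    · exact Or.inl ((List.suffix_cons C [L, R, C]).trans (List.suffix_append _ _))

lemma set_eq_5 (n : ℕ) :
    {w : List Region | FMWord w ∧ w.length = n + 5 ∧ UnknotType w} =
      {altWord L (n + 1) ++ [C, R, L, C], altWord L (n + 1) ++ [C, L, R, C]} := by
  ext w
  constructor
  · rintro ⟨hFM, hlen, hU⟩
    rcases hU with rfl | ⟨m, X, Y, rfl, hXY⟩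
    · simp at hlen
    · have : m = n := by
        simp [altWord_length] at hlen; omega
      subst this
      rcases hXY with ⟨rfl, rfl⟩ | ⟨rfl, rfl⟩
      · exact Or.inl rfl
      · exact Or.inr rfl
  · rintro (rfl | rfl)
    · exact ⟨FMWord_alt n R L (Or.inl ⟨rfl, rfl⟩), by simp [altWord_length],
        Or.inr ⟨n, R, L, rfl, Or.inl ⟨rfl, rfl⟩⟩⟩
    · exact ⟨FMWord_alt n L R (Or.inr ⟨rfl, rfl⟩), by simp [altWord_length],
        Or.inr ⟨n, L, R, rfl, Or.inr ⟨rfl, rfl⟩⟩⟩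

lemma U_eq (h : ℕ) :
    U h = Set.ncard {w : List Region | FMWord w ∧ w.length = h ∧ UnknotType w} := rfl

lemma U_five (n : ℕ) : U (n + 5) = 2 := by
  rw [U_eq, set_eq_5]
  apply Set.ncard_pair
  intro hcontra
  have := List.append_cancel_left hcontra
  simp at this

lemma U_three : U 3 = 1 := by
  rw [U_eq]
  have : {w : List Region | FMWord w ∧ w.length = 3 ∧ UnknotType w} = {[L, R, C]} := by
    ext w
    constructor
    · rintro ⟨hFM, hlen, hU⟩
      rcases hU with rfl | ⟨m, X, Y, rfl, hXY⟩
      · rfl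
      · simp [altWord_length] at hlen
    · rintro rfl
      refine ⟨⟨?_, rfl, Or.inl (List.suffix_refl _)⟩, rfl, Or.inl rfl⟩
      simp only [List.Chain', List.isChain_cons_cons, List.isChain_singleton, and_true]
      exact ⟨by decide, by decide⟩
  rw [this]
  exact Set.ncard_singleton _

lemma U_four : U 4 = 0 := by
  rw [U_eq]
  have : {w : List Region | FMWord w ∧ w.length = 4 ∧ UnknotType w} = ∅ := by
    ext w
    simp only [Set.mem_setOf_eq, Set.mem_empty_iff_false, iff_false]
    rintro ⟨hFM, hlen, hU⟩
    rcases hU with rfl | ⟨m, X, Y, rfl, hXY⟩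
    · simp at hlen
    · simp [altWord_length] at hlen
  rw [this]
  exact Set.ncard_empty _

/-- The number of unknot-type Fink–Mao region words of length `h` is 1 for `h = 3`,
0 for `h = 4`, and 2 for each `h ∈ {5, 6, 7, 8, 9}`; hence exactly 11 of the 85
Fink–Mao tie sequences of lengths 3 through 9 are of unknot type. -/
theorem count_unknots :
    U 3 = 1 ∧ U 4 = 0 ∧ U 5 = 2 ∧ U 6 = 2 ∧ U 7 = 2 ∧ U 8 = 2 ∧ U 9 = 2 ∧
    (∑ h ∈ Finset.Icc 3 9, U h) = 11 := by
  have h5 : U 5 = 2 := U_five 0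
  have h6 : U 6 = 2 := U_five 1
  have h7 : U 7 = 2 := U_five 2
  have h8 : U 8 = 2 := U_five 3
  have h9 : U 9 = 2 := U_five 4
  refine ⟨U_three, U_four, h5, h6, h7, h8, h9, ?_⟩
  have : Finset.Icc 3 9 = ({3, 4, 5, 6, 7, 8, 9} : Finset ℕ) := by decide
  rw [this]
  simp [Finset.sum_insert, U_three, U_four, h5, h6, h7, h8, h9]
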